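/- The function h ↦ f(g(x+h)) and the function given by the series ∑_λ(n) over partitions (Faà di Bruno coefficients of f, g at x) have the same n-th derivative at h = 0 for every n; hence if both are analytic in h near 0 they are equal on a neighborhood of 0. -/

import Mathlib

open Filter

namespace FaaAux

open Finset

variable {α : Type*} [DecidableEq α]

/-- The multinomial coefficient of a multiset (old Mathlib `Multiset.multinomial`). -/
noncomputable def _root_.Multiset.faaMultinomial (m : Multiset α) : ℕ := (Multiset.toFinsupp m).multinomial

lemma multinomial_spec' (s : Multiset α) :
    (∏ i ∈ s.toFinset, (s.count i).factorial) * s.faaMultinomial = (Multiset.card s).factorial := by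
  have h := Nat.multinomial_spec s.toFinset s.count
  rw [Multiset.toFinset_sum_count_eq] at h
  rw [Multiset.faaMultinomial, Finsupp.multinomial_eq]
  convert h using 2
  rfl

lemma multinomial_erase (s : Multiset α) (a : α) (ha : a ∈ s) :
    (Multiset.card s) * (s.erase a).faaMultinomial = s.count a * s.faaMultinomial := by
  set k := s.count a with hk
  have hk1 : 0 < k := Multiset.count_pos.2 ha
  set Q := ∏ i ∈ s.toFinset.erase a, (s.count i).factorial with hQ
  have haf : a ∈ s.toFinset := Multiset.mem_toFinset.2 ha
  have e1 : k.factorial * Q * s.faaMultinomial = (Multiset.card s).factorial := by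
    rw [← multinomial_spec' s, ← Finset.mul_prod_erase _ _ haf]
  have eP : (∏ i ∈ (s.erase a).toFinset, ((s.erase a).count i).factorial)
      = (k-1).factorial * Q := by
    rw [Finset.prod_subset (Multiset.toFinset_subset.2 (s.erase_subset a))
      (fun i _ hi => by
        rw [Multiset.count_eq_zero_of_notMem (fun h => hi (Multiset.mem_toFinset.2 h))]
        rfl)]
    rw [← Finset.mul_prod_erase _ _ haf, Multiset.count_erase_self]
    congr 1
    apply Finset.prod_congr rfl
    intro i hi
    rw [Multiset.count_erase_of_ne (Finset.ne_of_mem_erase hi)]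
  have e2 : (k-1).factorial * Q * (s.erase a).faaMultinomial = (Multiset.card s - 1).factorial := by
    rw [← eP, multinomial_spec', Multiset.card_erase_of_mem ha]
    rfl
  have hc1 : 0 < Multiset.card s := Multiset.card_pos.2 (fun h => by simp [h] at ha)
  have e3 := Nat.mul_factorial_pred hc1.ne'
  have e4 := Nat.mul_factorial_pred hk1.ne'
  have hQpos : 0 < (k-1).factorial * Q := by
    apply Nat.mul_pos (Nat.factorial_pos _)
    exact Finset.prod_pos fun i _ => Nat.factorial_pos _
  apply Nat.eq_of_mul_eq_mul_left hQpos
  calc (k-1).factorial * Q * (Multiset.card s * (s.erase a).faaMultinomial)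
      = Multiset.card s * ((k-1).factorial * Q * (s.erase a).faaMultinomial) := by ring
    _ = Multiset.card s * (Multiset.card s - 1).factorial := by rw [e2]
    _ = (Multiset.card s).factorial := e3
    _ = k.factorial * Q * s.faaMultinomial := e1.symm
    _ = (k-1).factorial * Q * (k * s.faaMultinomial) := by
        rw [← e4]; ring

lemma multinomial_pascal {s : Multiset α} (hs : s ≠ 0) :
    s.faaMultinomial = ∑ a ∈ s.toFinset, (s.erase a).faaMultinomial := by
  have hc : 0 < Multiset.card s := Multiset.card_pos.2 hs
  apply Nat.eq_of_mul_eq_mul_left hc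
  rw [Finset.mul_sum]
  calc Multiset.card s * s.faaMultinomial
      = (∑ a ∈ s.toFinset, s.count a) * s.faaMultinomial := by
        rw [Multiset.toFinset_sum_count_eq]
    _ = ∑ a ∈ s.toFinset, s.count a * s.faaMultinomial := by rw [Finset.sum_mul]
    _ = ∑ a ∈ s.toFinset, Multiset.card s * (s.erase a).faaMultinomial := by
        exact Finset.sum_congr rfl fun a ha =>
          (multinomial_erase s a (Multiset.mem_toFinset.1 ha)).symm

/-- The finset of lists whose underlying multiset is `s`. -/
noncomputable def listsOf (s : Multiset α) : Finset (List α) := s.toList.permutations.toFinset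

lemma mem_listsOf {s : Multiset α} {l : List α} :
    l ∈ listsOf s ↔ (l : Multiset α) = s := by
  rw [listsOf, List.mem_toFinset, List.mem_permutations, ← Multiset.coe_eq_coe,
    Multiset.coe_toList]

lemma card_listsOf (s : Multiset α) : (listsOf s).card = s.faaMultinomial := by
  induction s using Multiset.strongInductionOn with
  | ih s IH =>
    rcases eq_or_ne s 0 with rfl | hs
    · have : listsOf (0 : Multiset α) = {[]} := by
        ext l; rw [mem_listsOf]; simp [Multiset.coe_eq_zero]
      simp [this, Multiset.faaMultinomial, Finsupp.multinomial_eq, Nat.multinomial]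
    · have hdecomp : listsOf s
          = s.toFinset.biUnion (fun a => (listsOf (s.erase a)).image (List.cons a)) := by
        ext l
        rw [mem_listsOf, Finset.mem_biUnion]
        constructor
        · intro hl
          match l with
          | [] => exact absurd hl.symm (by simpa [Multiset.coe_eq_zero] using hs)
          | a :: t =>
            have ha : a ∈ s := by rw [← hl]; simp
            refine ⟨a, Multiset.mem_toFinset.2 ha, Finset.mem_image.2 ⟨t, ?_, rfl⟩⟩
            rw [mem_listsOf, ← hl]
            simp [Multiset.cons_coe]
        · rintro ⟨a, ha, hl⟩
          obtain ⟨t, ht, rfl⟩ := Finset.mem_image.1 hl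
          rw [mem_listsOf] at ht
          rw [← Multiset.cons_coe, ht, Multiset.cons_erase (Multiset.mem_toFinset.1 ha)]
      rw [hdecomp, Finset.card_biUnion, multinomial_pascal hs]
      · apply Finset.sum_congr rfl
        intro a ha
        rw [Finset.card_image_of_injective _ (List.cons_injective), IH _
          (Multiset.erase_lt.2 (Multiset.mem_toFinset.1 ha))]
      · intro a _ b _ hab
        simp only [Finset.disjoint_left]
        intro l hl hl'
        obtain ⟨t, _, rfl⟩ := Finset.mem_image.1 hl
        obtain ⟨t', _, h⟩ := Finset.mem_image.1 hl'
        exact hab (List.cons.injEq .. ▸ h).1.symm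

/-- The partition underlying a composition. -/
def _root_.Composition.toPartition {n : ℕ} (c : Composition n) : Nat.Partition n where
  parts := ↑c.blocks
  parts_pos := fun hi => c.blocks_pos hi
  parts_sum := by rw [Multiset.sum_coe, c.blocks_sum]

lemma card_fiber {n : ℕ} (p : Nat.Partition n) :
    (Finset.univ.filter (fun c : Composition n => Composition.toPartition c = p)).card
      = p.parts.faaMultinomial := by
  rw [← card_listsOf p.parts]
  apply Finset.card_bij (fun c _ => c.blocks)
  · intro c hc
    rw [mem_listsOf]
    have := (Finset.mem_filter.1 hc).2
    exact congrArg Nat.Partition.parts this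
  · intro c _ c' _ h
    exact Composition.ext h
  · intro l hl
    rw [mem_listsOf] at hl
    have hpos : ∀ {i : ℕ}, i ∈ l → 0 < i := fun hi => p.parts_pos (hl ▸ Multiset.mem_coe.2 hi)
    have hsum : l.sum = n := by
      have : (l : Multiset ℕ).sum = n := hl ▸ p.parts_sum
      rwa [Multiset.sum_coe] at this
    refine ⟨⟨l, @hpos, hsum⟩, Finset.mem_filter.2 ⟨Finset.mem_univ _, ?_⟩, rfl⟩
    apply Nat.Partition.ext
    exact hl

lemma comp_sum_eq_partition_sum {n : ℕ} (A B : ℕ → ℝ) :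
    ∑ c : Composition n, A c.length * ∏ i, B (c.blocksFun i)
      = ∑ p : Nat.Partition n,
          (p.parts.faaMultinomial : ℝ) * (A (Multiset.card p.parts) * ((p.parts.map B).prod)) := by
  have key : ∀ c : Composition n,
      A c.length * ∏ i, B (c.blocksFun i)
        = A (Multiset.card (Composition.toPartition c).parts)
            * (((Composition.toPartition c).parts.map B).prod) := by
    intro c
    have h1 : Multiset.card (Composition.toPartition c).parts = c.length := by
      simp [Composition.toPartition, Composition.length]
    have h2 : ((Composition.toPartition c).parts.map B).prod = ∏ i, B (c.blocksFun i) := by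
      show ((↑c.blocks : Multiset ℕ).map B).prod = _
      rw [Multiset.map_coe, Multiset.prod_coe]
      rw [← List.ofFn_getElem (xs := c.blocks), List.map_ofFn, List.prod_ofFn]
      simp [Composition.blocksFun, Function.comp]
    rw [h1, h2]
  calc ∑ c : Composition n, A c.length * ∏ i, B (c.blocksFun i)
      = ∑ p : Nat.Partition n, ∑ c ∈ Finset.univ.filter
          (fun c : Composition n => Composition.toPartition c = p),
          A c.length * ∏ i, B (c.blocksFun i) := by
        rw [Finset.sum_fiberwise]
    _ = ∑ p : Nat.Partition n,
          (p.parts.faaMultinomial : ℝ) * (A (Multiset.card p.parts) * ((p.parts.map B).prod)) := by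
        apply Finset.sum_congr rfl
        intro p _
        rw [Finset.sum_congr rfl (fun c hc => by
          rw [key c, (Finset.mem_filter.1 hc).2])]
        rw [Finset.sum_const, nsmul_eq_mul, card_fiber]

lemma comp_coeff (q p : FormalMultilinearSeries ℝ ℝ ℝ) (n : ℕ) :
    (q.comp p).coeff n
      = ∑ c : Composition n, q.coeff c.length * ∏ i, p.coeff (c.blocksFun i) := by
  rw [FormalMultilinearSeries.coeff, FormalMultilinearSeries.comp,
    ContinuousMultilinearMap.sum_apply]
  apply Finset.sum_congr rfl
  intro c _
  rw [FormalMultilinearSeries.compAlongComposition_apply]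
  have : p.applyComposition c 1 = fun i => p.coeff (c.blocksFun i) := by
    funext i
    rw [FormalMultilinearSeries.applyComposition, FormalMultilinearSeries.coeff]
    congr
  rw [this]
  have := FormalMultilinearSeries.apply_eq_prod_smul_coeff
    (p := q) (n := c.length) (y := fun i => p.coeff (c.blocksFun i))
  rw [this, smul_eq_mul, mul_comm]

end FaaAux


/-- The Faà di Bruno coefficient of `f, g` at `x`:
`∑_{λ⊢n} f⁽|λ|⁾(g(x)) ∏_{(l,k)∈λ} (g⁽ˡ⁾(x)/l!)ᵏ / k!`. -/
noncomputable def faaCoeff (f g : ℝ → ℝ) (x : ℝ) (n : ℕ) : ℝ :=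
  ∑ p : Nat.Partition n,
    iteratedDeriv p.parts.card f (g x) *
      ∏ l ∈ p.parts.toFinset,
        (iteratedDeriv l g x / l.factorial) ^ (p.parts.count l) /
          (p.parts.count l).factorial

/-- `h ↦ f(g(x+h))` and the partition series `h ↦ ∑ₙ hⁿ ∑_{λ⊢n} …` have the same
`n`-th derivative at `h = 0` for every `n`; hence, both being analytic near `0`,
they agree on a neighborhood of `0`. -/
theorem composition_eq_partition_series (f g : ℝ → ℝ) (x : ℝ)
    (hf : AnalyticAt ℝ f (g x)) (hg : AnalyticAt ℝ g x)
    (hS : AnalyticAt ℝ (fun h : ℝ => ∑' n : ℕ, faaCoeff f g x n * h ^ n) 0) :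
    (∀ n : ℕ, iteratedDeriv n (fun h : ℝ => f (g (x + h))) 0 =
        iteratedDeriv n (fun h : ℝ => ∑' m : ℕ, faaCoeff f g x m * h ^ m) 0) ∧
      (fun h : ℝ => f (g (x + h))) =ᶠ[nhds 0]
        (fun h : ℝ => ∑' m : ℕ, faaCoeff f g x m * h ^ m) := by

  -- the inner function
  set φ : ℝ → ℝ := fun h => g (x + h) with hφdef
  have hφ : AnalyticAt ℝ φ 0 := by
    have haff : AnalyticAt ℝ (fun h : ℝ => x + h) 0 := analyticAt_const.add analyticAt_id
    have hg' : AnalyticAt ℝ g ((fun h : ℝ => x + h) 0) := by simpa using hg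
    exact hg'.comp haff
  obtain ⟨pp, hpp⟩ := hφ
  obtain ⟨q, hq0⟩ := hf
  have hq : HasFPowerSeriesAt f q (φ 0) := by simpa [hφdef] using hq0
  have hc : HasFPowerSeriesAt (f ∘ φ) (q.comp pp) 0 := hq.comp hpp
  -- coefficients of q and pp
  have hqc : ∀ m : ℕ, (m.factorial : ℝ) * q.coeff m = iteratedDeriv m f (g x) := by
    intro m
    obtain ⟨r, hr⟩ := hq0
    have h1 := hr.factorial_smul (y := (1:ℝ)) m
    rw [iteratedDeriv_eq_iteratedFDeriv]
    rw [← h1, FormalMultilinearSeries.coeff, nsmul_eq_mul]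
    rfl
  have hpc : ∀ l : ℕ, (l.factorial : ℝ) * pp.coeff l = iteratedDeriv l g x := by
    intro l
    obtain ⟨r, hr⟩ := hpp
    have h1 := hr.factorial_smul (y := (1:ℝ)) l
    have h2 : iteratedDeriv l φ 0 = iteratedDeriv l g x := by
      have := iteratedDeriv_comp_const_add l g x
      have h3 : φ = fun z => g (x + z) := rfl
      rw [h3, this]
      simp
    rw [← h2, iteratedDeriv_eq_iteratedFDeriv, ← h1, FormalMultilinearSeries.coeff,
      nsmul_eq_mul]
    rfl
  -- the key coefficient identity
  have key : ∀ n : ℕ, (q.comp pp).coeff n = faaCoeff f g x n := by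
    intro n
    rw [FaaAux.comp_coeff, FaaAux.comp_sum_eq_partition_sum (A := q.coeff) (B := pp.coeff),
      faaCoeff]
    apply Finset.sum_congr rfl
    intro p _
    have hprod : ((p.parts.map pp.coeff).prod)
        = ∏ l ∈ p.parts.toFinset, pp.coeff l ^ p.parts.count l :=
      Finset.prod_multiset_map_count _ _
    have hBl : ∀ l ∈ p.parts.toFinset,
        (iteratedDeriv l g x / l.factorial : ℝ) = pp.coeff l := by
      intro l _
      rw [← hpc l]
      field_simp
    have hsplit : ∏ l ∈ p.parts.toFinset,
        ((iteratedDeriv l g x / l.factorial) ^ (p.parts.count l) /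
          (p.parts.count l).factorial : ℝ)
        = (∏ l ∈ p.parts.toFinset, pp.coeff l ^ p.parts.count l) /
          (∏ l ∈ p.parts.toFinset, ((p.parts.count l).factorial : ℝ)) := by
      rw [← Finset.prod_div_distrib]
      exact Finset.prod_congr rfl fun l hl => by rw [hBl l hl]
    rw [hsplit, ← hprod]
    -- remaining: iteratedDeriv card f (g x) * (P / F) = multinomial * (q.coeff card * P)
    have hA : iteratedDeriv (Multiset.card p.parts) f (g x)
        = ((Multiset.card p.parts).factorial : ℝ) * q.coeff (Multiset.card p.parts) :=
      (hqc _).symm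
    have hmn : ((Multiset.card p.parts).factorial : ℝ)
        = (∏ l ∈ p.parts.toFinset, ((p.parts.count l).factorial : ℝ)) *
            (p.parts.faaMultinomial : ℝ) := by
      rw [← Nat.cast_prod, ← Nat.cast_mul, FaaAux.multinomial_spec']
    have hFne : (∏ l ∈ p.parts.toFinset, ((p.parts.count l).factorial : ℝ)) ≠ 0 :=
      Finset.prod_ne_zero_iff.2 fun l _ => Nat.cast_ne_zero.2 (Nat.factorial_ne_zero _)
    rw [hA, hmn]
    field_simp
  -- eventual equality
  have hev : (fun h : ℝ => f (g (x + h))) =ᶠ[nhds 0]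
      (fun h : ℝ => ∑' m : ℕ, faaCoeff f g x m * h ^ m) := by
    have h1 := hasFPowerSeriesAt_iff.1 hc
    filter_upwards [h1] with z hz
    have h2 : (fun n => z ^ n • (q.comp pp).coeff n)
        = fun n => faaCoeff f g x n * z ^ n := by
      funext n
      rw [key n, smul_eq_mul, mul_comm]
    have h3 := hz.tsum_eq
    rw [h2] at h3
    simp only [Function.comp_apply, zero_add, hφdef] at h3
    exact h3.symm
  exact ⟨fun n => hev.iteratedDeriv_eq n, hev⟩
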